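/- arXiv:1806.00008 — 2 statements merged into one kernel-verified Lean document; each statement's English description precedes it below -/
import Mathlib

section
/- Let φ: M → N be a homomorphism of finite abelian groups. For g ∈ Fun(N), the Fourier transform of the pullback satisfies 𝔉_M(φ^* g) = √(#M/#N) · (φ^∨)_*(𝔉_N g), where (φ^∨)_* denotes fiberwise sum along the dual homomorphism φ^∨: N^∨ → M^∨. -/
noncomputable section

/-- The finite Fourier transform `Fun(M) → Fun(M^∨)`,
`(𝔉_M f)(χ) = (1/√#M) ∑ₐ conj(χ a) f a`. -/
def fourierT (M : Type*) [CommGroup M] [Fintype M] (f : M → ℂ) (χ : M →* Circle) : ℂ :=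
  ((Real.sqrt (Fintype.card M) : ℂ))⁻¹ * ∑ a : M, (starRingEnd ℂ) (χ a : ℂ) * f a

/-!
STATEMENT 2: For a homomorphism `φ : M → N` of finite abelian groups and
`g ∈ Fun(N)`, `𝔉_M(φ^* g) = √(#M/#N) · (φ^∨)_*(𝔉_N g)`, where `(φ^∨)_*` is the
fiberwise sum along the dual homomorphism `φ^∨ : N^∨ → M^∨`, `ν ↦ ν ∘ φ`.
-/

open Finset

/-- Bridge between multiplicative characters to `Circle` and complex-valued additive
characters. -/
def circEquiv (G : Type*) [CommGroup G] [Finite G] :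
    (G →* Circle) ≃ AddChar (Additive G) ℂ :=
  ((MulEquiv.monoidHomCongrLeft (N := Circle) (MulEquiv.multiplicativeAdditive G).symm
      ).toEquiv.trans
    (AddChar.toMonoidHomEquiv (A := Additive G) (M := Circle)).symm).trans
    AddChar.circleEquivComplex.toEquiv

lemma circEquiv_apply {G : Type*} [CommGroup G] [Finite G] (χ : G →* Circle) (a : G) :
    circEquiv G χ (Additive.ofMul a) = (χ a : ℂ) := rfl

instance finiteHomCircle (G : Type*) [CommGroup G] [Finite G] : Finite (G →* Circle) :=
  Finite.of_equiv _ (circEquiv G).symm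

instance fintypeHomCircle (G : Type*) [CommGroup G] [Fintype G] : Fintype (G →* Circle) := by
  classical exact Fintype.ofFinite _

/-- Orthogonality: sum of a fixed element over all characters. -/
lemma sum_dual_ite {G : Type*} [CommGroup G] [Fintype G] [DecidableEq G] (a : G) :
    ∑ χ : G →* Circle, (χ a : ℂ) = if a = 1 then (Fintype.card G : ℂ) else 0 := by
  classical
  have h := Fintype.sum_equiv (circEquiv G) (fun χ : G →* Circle => (χ a : ℂ))
    (fun ψ => ψ (Additive.ofMul a)) (fun χ => rfl)
  rw [h, AddChar.sum_apply_eq_ite]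
  simp

/-- Orthogonality: sum of a fixed character over all elements. -/
lemma sum_char_ite {G : Type*} [CommGroup G] [Fintype G] (χ : G →* Circle) [Decidable (χ = 1)] :
    ∑ a : G, (χ a : ℂ) = if χ = 1 then (Fintype.card G : ℂ) else 0 := by
  split_ifs with h
  · simp [h, Finset.card_univ]
  · obtain ⟨x, hx⟩ : ∃ x, χ x ≠ 1 := by
      by_contra hc
      push_neg at hc
      exact h (MonoidHom.ext fun x => hc x)
    have hx' : (χ x : ℂ) ≠ 1 := fun hh => hx (by ext; simpa using hh)
    refine eq_zero_of_mul_eq_self_left hx' ?_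
    rw [Finset.mul_sum]
    exact Fintype.sum_equiv (Equiv.mulLeft x) _ _ fun y => by
      simp [Equiv.mulLeft, map_mul]

theorem fourier_pullback
    (M N : Type*) [CommGroup M] [Fintype M] [CommGroup N] [Fintype N]
    (φ : M →* N) (g : N → ℂ) (ω : M →* Circle) :
    fourierT M (fun m => g (φ m)) ω =
      (Real.sqrt ((Fintype.card M : ℝ) / (Fintype.card N : ℝ)) : ℂ) *
        ∑ᶠ (ν : N →* Circle) (_ : ν.comp φ = ω), fourierT N g ν := by
  classical
  set cM : ℂ := (Fintype.card M : ℂ) with hcM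
  set cN : ℂ := (Fintype.card N : ℂ) with hcN
  set S : Finset (N →* Circle) := Finset.univ.filter (fun ν => ν.comp φ = ω) with hS
  have hfin : (∑ᶠ (ν : N →* Circle) (_ : ν.comp φ = ω), fourierT N g ν)
      = ∑ ν ∈ S, fourierT N g ν :=
    finsum_cond_eq_sum_of_cond_iff _ (fun {ν} _ => by simp [hS])
  have inner1 : ∀ ν : N →* Circle,
      (∑ m : M, (starRingEnd ℂ) (ω m : ℂ) * (ν (φ m) : ℂ))
        = if ν.comp φ = ω then cM else 0 := by
    intro ν
    have h1 : ∀ m : M, (starRingEnd ℂ) (ω m : ℂ) * (ν (φ m) : ℂ)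
        = (((ν.comp φ) * ω⁻¹) m : ℂ) := by
      intro m
      rw [← Circle.coe_inv_eq_conj]
      simp [mul_comm]
    calc ∑ m : M, (starRingEnd ℂ) (ω m : ℂ) * (ν (φ m) : ℂ)
        = ∑ m : M, (((ν.comp φ) * ω⁻¹) m : ℂ) := Finset.sum_congr rfl fun m _ => h1 m
      _ = if (ν.comp φ) * ω⁻¹ = 1 then cM else 0 := sum_char_ite _
      _ = if ν.comp φ = ω then cM else 0 := by simp [mul_inv_eq_one]
  have inner2 : ∀ (b : N) (m : M),
      (∑ ν : N →* Circle, (starRingEnd ℂ) (ν b : ℂ) * (ν (φ m) : ℂ))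
        = if b = φ m then cN else 0 := by
    intro b m
    have h1 : ∀ ν : N →* Circle, (starRingEnd ℂ) (ν b : ℂ) * (ν (φ m) : ℂ)
        = (ν (b⁻¹ * φ m) : ℂ) := by
      intro ν
      rw [← Circle.coe_inv_eq_conj]
      simp
    calc ∑ ν : N →* Circle, (starRingEnd ℂ) (ν b : ℂ) * (ν (φ m) : ℂ)
        = ∑ ν : N →* Circle, (ν (b⁻¹ * φ m) : ℂ) := Finset.sum_congr rfl fun ν _ => h1 ν
      _ = if b⁻¹ * φ m = 1 then cN else 0 := sum_dual_ite _
      _ = if b = φ m then cN else 0 := by simp [inv_mul_eq_one]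
  have key : cM * ∑ ν ∈ S, ∑ b : N, (starRingEnd ℂ) (ν b : ℂ) * g b
      = cN * ∑ m : M, (starRingEnd ℂ) (ω m : ℂ) * g (φ m) := by
    have e1 : ∑ ν : N →* Circle,
        (∑ b : N, (starRingEnd ℂ) (ν b : ℂ) * g b) *
          (∑ m : M, (starRingEnd ℂ) (ω m : ℂ) * (ν (φ m) : ℂ))
        = cM * ∑ ν ∈ S, ∑ b : N, (starRingEnd ℂ) (ν b : ℂ) * g b := by
      rw [Finset.mul_sum, hS, Finset.sum_filter]
      refine Finset.sum_congr rfl fun ν _ => ?_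
      rw [inner1 ν]
      split_ifs <;> ring
    have e2 : ∑ ν : N →* Circle,
        (∑ b : N, (starRingEnd ℂ) (ν b : ℂ) * g b) *
          (∑ m : M, (starRingEnd ℂ) (ω m : ℂ) * (ν (φ m) : ℂ))
        = cN * ∑ m : M, (starRingEnd ℂ) (ω m : ℂ) * g (φ m) := by
      calc ∑ ν : N →* Circle,
            (∑ b : N, (starRingEnd ℂ) (ν b : ℂ) * g b) *
              (∑ m : M, (starRingEnd ℂ) (ω m : ℂ) * (ν (φ m) : ℂ))
          = ∑ ν : N →* Circle, ∑ b : N, ∑ m : M,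
              ((starRingEnd ℂ) (ν b : ℂ) * g b) *
                ((starRingEnd ℂ) (ω m : ℂ) * (ν (φ m) : ℂ)) := by
            exact Finset.sum_congr rfl fun ν _ => Finset.sum_mul_sum _ _ _ _
        _ = ∑ b : N, ∑ ν : N →* Circle, ∑ m : M,
              ((starRingEnd ℂ) (ν b : ℂ) * g b) *
                ((starRingEnd ℂ) (ω m : ℂ) * (ν (φ m) : ℂ)) := Finset.sum_comm
        _ = ∑ b : N, ∑ m : M, ∑ ν : N →* Circle,
              ((starRingEnd ℂ) (ν b : ℂ) * g b) *
                ((starRingEnd ℂ) (ω m : ℂ) * (ν (φ m) : ℂ)) :=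
            Finset.sum_congr rfl fun b _ => Finset.sum_comm
        _ = ∑ b : N, ∑ m : M, (g b * (starRingEnd ℂ) (ω m : ℂ)) *
              ∑ ν : N →* Circle, (starRingEnd ℂ) (ν b : ℂ) * (ν (φ m) : ℂ) := by
            refine Finset.sum_congr rfl fun b _ => Finset.sum_congr rfl fun m _ => ?_
            rw [Finset.mul_sum]
            exact Finset.sum_congr rfl fun ν _ => by ring
        _ = ∑ b : N, ∑ m : M, (g b * (starRingEnd ℂ) (ω m : ℂ)) *
              (if b = φ m then cN else 0) := by
            refine Finset.sum_congr rfl fun b _ => Finset.sum_congr rfl fun m _ => ?_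
            rw [inner2 b m]
        _ = ∑ m : M, ∑ b : N, (g b * (starRingEnd ℂ) (ω m : ℂ)) *
              (if b = φ m then cN else 0) := Finset.sum_comm
        _ = ∑ m : M, (g (φ m) * (starRingEnd ℂ) (ω m : ℂ)) * cN := by
            refine Finset.sum_congr rfl fun m _ => ?_
            rw [Finset.sum_eq_single (φ m)]
            · simp
            · intro b _ hb; simp [hb]
            · intro h; exact absurd (Finset.mem_univ _) h
        _ = cN * ∑ m : M, (starRingEnd ℂ) (ω m : ℂ) * g (φ m) := by
            rw [Finset.mul_sum]
            exact Finset.sum_congr rfl fun m _ => by ring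
    rw [← e1, e2]
  -- final assembly
  have hM0 : (0:ℝ) < (Fintype.card M : ℝ) := by
    exact_mod_cast Fintype.card_pos
  have hN0 : (0:ℝ) < (Fintype.card N : ℝ) := by
    exact_mod_cast Fintype.card_pos
  have hsM : ((Real.sqrt (Fintype.card M) : ℝ) : ℂ) * ((Real.sqrt (Fintype.card M) : ℝ) : ℂ)
      = cM := by
    rw [← Complex.ofReal_mul, Real.mul_self_sqrt hM0.le, hcM]; norm_cast
  have hsN : ((Real.sqrt (Fintype.card N) : ℝ) : ℂ) * ((Real.sqrt (Fintype.card N) : ℝ) : ℂ)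
      = cN := by
    rw [← Complex.ofReal_mul, Real.mul_self_sqrt hN0.le, hcN]; norm_cast
  have hsM0 : ((Real.sqrt (Fintype.card M) : ℝ) : ℂ) ≠ 0 := by
    simp [Real.sqrt_eq_zero', not_le, hM0]
  have hsN0 : ((Real.sqrt (Fintype.card N) : ℝ) : ℂ) ≠ 0 := by
    simp [Real.sqrt_eq_zero', not_le, hN0]
  have hdiv : ((Real.sqrt ((Fintype.card M : ℝ) / (Fintype.card N : ℝ)) : ℝ) : ℂ)
      = ((Real.sqrt (Fintype.card M) : ℝ) : ℂ) / ((Real.sqrt (Fintype.card N) : ℝ) : ℂ) := by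
    rw [Real.sqrt_div hM0.le]; push_cast; ring
  rw [hfin]
  simp only [fourierT]
  rw [hdiv, ← Finset.mul_sum]
  -- now both sides are scalars times sums; use key
  set A : ℂ := ∑ m : M, (starRingEnd ℂ) (ω m : ℂ) * g (φ m) with hA
  set B : ℂ := ∑ ν ∈ S, ∑ b : N, (starRingEnd ℂ) (ν b : ℂ) * g b with hB
  set s : ℂ := ((Real.sqrt (Fintype.card M) : ℝ) : ℂ)
  set t : ℂ := ((Real.sqrt (Fintype.card N) : ℝ) : ℂ)
  -- key : cM * B = cN * A, cM = s*s, cN = t*t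
  have hkey : (s*s) * B = (t*t) * A := by rw [hsM, hsN]; exact key
  have hBA : B = (t*t) * A / (s*s) := by
    field_simp
    linear_combination hkey
  rw [hBA]
  field_simp
end
end

section
/- Let M be a finite abelian group, i: M' ↪ M an injective homomorphism and π: M ↠ M'' a surjective homomorphism with π ∘ i = 0. Set K = ker π, H = ker π / im i, and dually K̃ = ker i^∨ ⊆ M^∨, H̃ = ker i^∨ / im π^∨. Let j: K ↪ M, p: K ↠ H, j̃: K̃ ↪ M^∨, p̃: K̃ ↠ H̃ be the natural maps. Then for any Θ ∈ Fun(M): 𝔉_H(p_* j^* Θ) = (#K / √(#M · #H)) · p̃_* j̃^* 𝔉_M(Θ). -/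
open scoped Classical

noncomputable section

/-- The finite Fourier transform `(𝔉_M f)(χ) = (1/√#M) ∑ₐ conj(χ a) f a`,
for characters `χ : M →* Circle` valued in the unit circle. -/
def fourierN {M : Type*} [Group M] (f : M → ℂ) (χ : M →* Circle) : ℂ :=
  ((Real.sqrt (Nat.card M) : ℂ))⁻¹ * ∑ᶠ a : M, (starRingEnd ℂ) (χ a : ℂ) * f a

/-- Pushforward (fiberwise sum) of a function along a map. -/
def pushforwardN {α β : Type*} (φ : α → β) (f : α → ℂ) : β → ℂ :=
  fun b => ∑ᶠ (a : α) (_ : φ a = b), f a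

def mulCharEquivAddChar (G : Type*) [CommGroup G] :
    (G →* Circle) ≃ AddChar (Additive G) Circle where
  toFun ψ := { toFun := fun a => ψ a.toMul
               map_zero_eq_one' := ψ.map_one
               map_add_eq_mul' := fun _ _ => ψ.map_mul _ _ }
  invFun φ := { toFun := fun g => φ (Additive.ofMul g)
                map_one' := φ.map_zero_eq_one
                map_mul' := fun a b => φ.map_add_eq_mul a b }
  left_inv _ := rfl
  right_inv _ := rfl

instance myFiniteChar (G : Type*) [CommGroup G] [Finite G] : Finite (G →* Circle) :=
  Finite.of_equiv _ ((mulCharEquivAddChar G).trans AddChar.circleEquivComplex.toEquiv).symm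

lemma sum_mulChar {G : Type*} [CommGroup G] [Finite G] (x : G) :
    ∑ᶠ ψ : (G →* Circle), ((ψ x : ℂ)) = if x = 1 then (Nat.card G : ℂ) else 0 := by
  haveI : Fintype G := Fintype.ofFinite G
  haveI : Fintype (G →* Circle) := Fintype.ofFinite _
  rw [finsum_eq_sum_of_fintype]
  set e := (mulCharEquivAddChar G).trans AddChar.circleEquivComplex.toEquiv with he
  have h1 : ∀ ψ : G →* Circle, ((ψ x : ℂ)) = (e ψ) (Additive.ofMul x) := fun ψ => rfl
  simp_rw [h1]
  rw [Equiv.sum_comp e (fun φ : AddChar (Additive G) ℂ => φ (Additive.ofMul x))]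
  rw [AddChar.sum_apply_eq_ite]
  have : (Additive.ofMul x = 0) ↔ x = 1 := by
    constructor <;> intro h <;> simpa using h
  rw [if_congr this rfl rfl]
  congr 1
  rw [Nat.card_eq_fintype_card]
  exact congrArg _ (Fintype.card_congr Additive.toMul)


/-!
STATEMENT 10: Let `i : M' ↪ M`, `π : M ↠ M''` be homomorphisms of finite
abelian groups with `π ∘ i = 0`.  Set `K = ker π`, `H = ker π / im i`, and
dually `K̃ = ker i^∨ ⊆ M^∨`, `H̃ = ker i^∨ / im π^∨`.  With `j : K ↪ M`,
`p : K ↠ H`, `j̃ : K̃ ↪ M^∨`, `p̃ : K̃ ↠ H̃` the natural maps, for any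
`Θ ∈ Fun(M)`:
  `𝔉_H(p_* j^* Θ) = (#K / √(#M · #H)) · p̃_* j̃^* 𝔉_M(Θ)`.

We express this equality of functions on `H^∨ ≅ H̃` by evaluating at an
arbitrary element `χ ∈ K̃` (i.e. `χ : M →* Circle` with `χ ∘ i = 1`): the
left side is evaluated at the character of `H` obtained by descending `χ`,
and the right side — the fiberwise sum of `𝔉_M(Θ)|_{K̃}` over the class of
`χ` in `H̃` — is the sum of `𝔉_M(Θ)(χ · π^∨ψ)` over `ψ ∈ (M'')^∨` (the
fiber is the coset `χ · im π^∨`, and `π^∨` is injective since `π` is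
surjective).
-/

theorem fourier_subquotient_duality
    {M M' M'' : Type*} [CommGroup M] [Finite M] [CommGroup M'] [Finite M']
    [CommGroup M''] [Finite M'']
    (i : M' →* M) (π : M →* M'')
    (hi : Function.Injective i) (hπ : Function.Surjective π)
    (hcomp : π.comp i = 1)
    (Θ : M → ℂ) (χ : M →* Circle) (hχ : χ.comp i = 1) :
    fourierN
      (pushforwardN (⇑(QuotientGroup.mk' ((i.range).subgroupOf π.ker)))
        (fun k : π.ker => Θ (k : M)))
      (QuotientGroup.lift ((i.range).subgroupOf π.ker) (χ.comp π.ker.subtype)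
        (fun x hx => by
          obtain ⟨m', hm'⟩ := MonoidHom.mem_range.mp (Subgroup.mem_subgroupOf.mp hx)
          have h1 : χ (i m') = 1 := by simpa using DFunLike.congr_fun hχ m'
          simpa [hm'] using h1))
      = (((Nat.card π.ker : ℝ) /
            Real.sqrt ((Nat.card M : ℝ) *
              (Nat.card (π.ker ⧸ (i.range).subgroupOf π.ker) : ℝ)) : ℝ) : ℂ) *
          ∑ᶠ ψ : M'' →* Circle, fourierN Θ (χ * ψ.comp π) := by
  haveI : Fintype M := Fintype.ofFinite M
  haveI : Fintype M'' := Fintype.ofFinite M''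
  haveI : Fintype π.ker := Fintype.ofFinite _
  haveI : Fintype (π.ker ⧸ (i.range).subgroupOf π.ker) := Fintype.ofFinite _
  haveI : Fintype (M'' →* Circle) := Fintype.ofFinite _
  set N := (i.range).subgroupOf π.ker with hN
  set S : ℂ := ∑ k : π.ker, (starRingEnd ℂ) ((χ k : ℂ)) * Θ k with hS
  -- cardinality relation
  have hcard : (Nat.card M) = Nat.card π.ker * Nat.card M'' := by
    have h1 : Nat.card M'' = Nat.card (M ⧸ π.ker) :=
      (Nat.card_congr (QuotientGroup.quotientKerEquivOfSurjective π hπ).toEquiv).symm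
    rw [h1, Subgroup.card_eq_card_quotient_mul_card_subgroup π.ker]
    ring
  -- LHS computation
  have hL : ∀ χb : (π.ker ⧸ N) →* Circle, (∀ k : π.ker, χb (QuotientGroup.mk' N k) = χ k) →
      fourierN (pushforwardN (⇑(QuotientGroup.mk' N)) (fun k : π.ker => Θ (k : M))) χb
        = ((Real.sqrt (Nat.card (π.ker ⧸ N)) : ℂ))⁻¹ * S := by
    intro χb hχb
    unfold fourierN pushforwardN
    congr 1
    rw [finsum_eq_sum_of_fintype]
    calc ∑ h : π.ker ⧸ N, (starRingEnd ℂ) ((χb h : ℂ)) *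
            ∑ᶠ (k : π.ker) (_ : QuotientGroup.mk' N k = h), Θ (k : M)
        = ∑ h : π.ker ⧸ N, ∑ k ∈ Finset.univ.filter (fun k => QuotientGroup.mk' N k = h),
            (starRingEnd ℂ) ((χ k : ℂ)) * Θ (k : M) := by
          refine Finset.sum_congr rfl fun h _ => ?_
          rw [finsum_cond_eq_sum_of_cond_iff _
            (t := Finset.univ.filter (fun k => QuotientGroup.mk' N k = h)) (fun {x} _ => by simp only [Finset.mem_filter, Finset.mem_univ, true_and]), Finset.mul_sum]
          refine Finset.sum_congr rfl fun k hk => ?_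
          simp only [Finset.mem_filter] at hk
          rw [← hk.2, hχb k]
      _ = S := by
          rw [hS]
          exact Finset.sum_fiberwise _ _ _
  -- RHS computation
  have hchar : ∀ a : M, ∑ ψ : (M'' →* Circle), (starRingEnd ℂ) ((ψ (π a) : ℂ))
      = if π a = 1 then (Nat.card M'' : ℂ) else 0 := by
    intro a
    rw [← map_sum, ← finsum_eq_sum_of_fintype, sum_mulChar (π a)]
    split_ifs <;> simp
  have hR : ∑ᶠ ψ : (M'' →* Circle), fourierN Θ (χ * ψ.comp π)
      = ((Real.sqrt (Nat.card M) : ℂ))⁻¹ * ((Nat.card M'' : ℂ) * S) := by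
    rw [finsum_eq_sum_of_fintype]
    unfold fourierN
    have h2 : ∀ ψ : M'' →* Circle,
        ∑ᶠ a : M, (starRingEnd ℂ) (((χ * ψ.comp π) a : ℂ)) * Θ a
        = ∑ a : M, (starRingEnd ℂ) ((ψ (π a) : ℂ)) * ((starRingEnd ℂ) ((χ a : ℂ)) * Θ a) := by
      intro ψ
      rw [finsum_eq_sum_of_fintype]
      refine Finset.sum_congr rfl fun a _ => ?_
      have : (((χ * ψ.comp π) a : Circle) : ℂ) = (χ a : ℂ) * (ψ (π a) : ℂ) := by
        simp [MonoidHom.mul_apply]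
      rw [this, map_mul]
      ring
    simp_rw [h2]
    rw [← Finset.mul_sum, Finset.sum_comm]
    congr 1
    have h3 : ∀ a : M, ∑ ψ : (M'' →* Circle),
        (starRingEnd ℂ) ((ψ (π a) : ℂ)) * ((starRingEnd ℂ) ((χ a : ℂ)) * Θ a)
        = (if π a = 1 then (Nat.card M'' : ℂ) else 0) * ((starRingEnd ℂ) ((χ a : ℂ)) * Θ a) := by
      intro a
      rw [← Finset.sum_mul, hchar a]
    simp_rw [h3, ite_mul, zero_mul]
    rw [← Finset.sum_filter, ← Finset.mul_sum]
    congr 1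
    rw [hS, Finset.sum_subtype (p := (· ∈ π.ker)) (Finset.univ.filter (fun a => π a = 1))
      (fun x => by simp [MonoidHom.mem_ker]) (fun a => (starRingEnd ℂ) ((χ a : ℂ)) * Θ a)]
  rw [hL _ (fun k => rfl), hR]
  have hm0 : (0:ℝ) < (Nat.card M : ℝ) := by exact_mod_cast Nat.card_pos
  have hq0 : (0:ℝ) < (Nat.card (π.ker ⧸ N) : ℝ) := by exact_mod_cast Nat.card_pos
  have ha0 : Real.sqrt (Nat.card M : ℝ) ≠ 0 := by positivity
  have hb0 : Real.sqrt (Nat.card (π.ker ⧸ N) : ℝ) ≠ 0 := by positivity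
  have h2 : Real.sqrt (Nat.card M : ℝ) * Real.sqrt (Nat.card M : ℝ) = (Nat.card M : ℝ) :=
    Real.mul_self_sqrt (le_of_lt hm0)
  have h3 : ((Nat.card M : ℝ)) = (Nat.card π.ker : ℝ) * (Nat.card M'' : ℝ) := by
    exact_mod_cast hcard
  have hscal : ((Real.sqrt (Nat.card (π.ker ⧸ N) : ℝ))⁻¹ : ℝ)
      = ((Nat.card π.ker : ℝ) /
          Real.sqrt ((Nat.card M : ℝ) * (Nat.card (π.ker ⧸ N) : ℝ))) *
        ((Real.sqrt (Nat.card M : ℝ))⁻¹ * (Nat.card M'' : ℝ)) := by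
    rw [Real.sqrt_mul (le_of_lt hm0)]
    have key : ∀ a b k m : ℝ, a ≠ 0 → b ≠ 0 → k * m = a * a →
        b⁻¹ = k / (a * b) * (a⁻¹ * m) := by
      intro a b k m ha hb hkm
      field_simp
      linear_combination -hkm
    exact key _ _ _ _ ha0 hb0 ((h2.trans h3).symm)
  have hscalC : ((Real.sqrt (Nat.card (π.ker ⧸ N)) : ℂ))⁻¹
      = (((Nat.card π.ker : ℝ) /
            Real.sqrt ((Nat.card M : ℝ) * (Nat.card (π.ker ⧸ N) : ℝ)) : ℝ) : ℂ) *
        (((Real.sqrt (Nat.card M) : ℂ))⁻¹ * (Nat.card M'' : ℂ)) := by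
    exact_mod_cast congrArg (fun x : ℝ => (x : ℂ)) hscal
  rw [hscalC]
  ring

end
end
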